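/- Let P be a connected finite Γ-colored d-complete poset and let a ∈ Γ. Then P is extendable by a if and only if L_a(P) = 2, where L_a(P) = ∑_{x ∈ L(y,P)} −θ_{κ(x),a} and y is the minimum of the finite nonempty chain P_a. -/

import Mathlib

/-!
Common definitions: Dynkin diagram data, Γ-colored posets, and the coloring
properties EC, NA, AC, ICE2, UCB1, LCB1 from the paper, together with
Γ-colored d-complete and Γ-colored minuscule posets, top trees, slant
irreducibility, extensions, lower frontier censuses, and full heaps.
-/

universe u v w

variable {Γ : Type u} {P : Type v}

/-- The integers `θ a b` form a Dynkin diagram datum. -/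
def DynkinDatum (θ : Γ → Γ → ℤ) : Prop :=
  (∀ a : Γ, θ a a = 2) ∧ (∀ a b : Γ, a ≠ b → θ a b ≤ 0) ∧
    (∀ a b : Γ, a ≠ b → (θ a b = 0 ↔ θ b a = 0))

/-- Colors `a` and `b` are adjacent. -/
def AdjColor (θ : Γ → Γ → ℤ) (a b : Γ) : Prop := θ a b < 0

/-- The Dynkin diagram is simply laced. -/
def SimplyLaced (θ : Γ → Γ → ℤ) : Prop :=
  ∀ a b : Γ, a ≠ b → θ a b = 0 ∨ θ a b = -1

/-- All closed intervals are finite. -/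
def LocallyFinitePoset (α : Type*) [PartialOrder α] : Prop :=
  ∀ x y : α, (Set.Icc x y).Finite

/-- A poset is connected if it cannot be written as a disjoint union of two nonempty
subposets with no comparabilities between them. -/
def ConnectedPoset (α : Type*) [PartialOrder α] : Prop :=
  ∀ S : Set α, S.Nonempty → Sᶜ.Nonempty → ∃ x ∈ S, ∃ y ∈ Sᶜ, x ≤ y ∨ y ≤ x

section
variable [PartialOrder P]

/-- (EC) Elements with equal colors are comparable. -/
def ColoredEC (κ : P → Γ) : Prop := ∀ x y : P, κ x = κ y → x ≤ y ∨ y ≤ x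

/-- (NA) Neighbors have adjacent colors. -/
def ColoredNA (θ : Γ → Γ → ℤ) (κ : P → Γ) : Prop :=
  ∀ x y : P, x ⋖ y → AdjColor θ (κ x) (κ y)

/-- (AC) Elements with adjacent colors are comparable. -/
def ColoredAC (θ : Γ → Γ → ℤ) (κ : P → Γ) : Prop :=
  ∀ x y : P, AdjColor θ (κ x) (κ y) → x ≤ y ∨ y ≤ x

/-- (ICE2) Between consecutive elements of a color `a`, the census of colors
adjacent to `a` is two. -/
def ColoredICE2 (θ : Γ → Γ → ℤ) (κ : P → Γ) : Prop :=
  ∀ (a : Γ) (x y : P), κ x = a → κ y = a → x < y → (∀ z ∈ Set.Ioo x y, κ z ≠ a) →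
    (∑ᶠ z ∈ Set.Ioo x y, -θ (κ z) a) = 2

/-- `U(x,P)`: elements above `x` with color adjacent to that of `x`. -/
def USet (θ : Γ → Γ → ℤ) (κ : P → Γ) (x : P) : Set P :=
  {y : P | x < y ∧ AdjColor θ (κ y) (κ x)}

/-- `L(x,P)`: elements below `x` with color adjacent to that of `x`. -/
def LSet (θ : Γ → Γ → ℤ) (κ : P → Γ) (x : P) : Set P :=
  {y : P | y < x ∧ AdjColor θ (κ y) (κ x)}

/-- (UCB1) Upper frontier census bound. -/
def ColoredUCB1 (θ : Γ → Γ → ℤ) (κ : P → Γ) : Prop :=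
  ∀ x : P, (∀ y : P, κ y = κ x → ¬x < y) →
    (USet θ κ x).Finite ∧ (∑ᶠ y ∈ USet θ κ x, -θ (κ y) (κ x)) ≤ 1

/-- (LCB1) Lower frontier census bound. -/
def ColoredLCB1 (θ : Γ → Γ → ℤ) (κ : P → Γ) : Prop :=
  ∀ x : P, (∀ y : P, κ y = κ x → ¬y < x) →
    (LSet θ κ x).Finite ∧ (∑ᶠ y ∈ LSet θ κ x, -θ (κ y) (κ x)) ≤ 1

/-- A Γ-colored d-complete poset: locally finite, surjectively colored, and
satisfying EC, NA, AC, ICE2, and UCB1. -/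
def GColoredDComplete (θ : Γ → Γ → ℤ) (κ : P → Γ) : Prop :=
  LocallyFinitePoset P ∧ Function.Surjective κ ∧ ColoredEC κ ∧ ColoredNA θ κ ∧
    ColoredAC θ κ ∧ ColoredICE2 θ κ ∧ ColoredUCB1 θ κ

/-- A Γ-colored minuscule poset: Γ-colored d-complete and LCB1. -/
def GColoredMinuscule (θ : Γ → Γ → ℤ) (κ : P → Γ) : Prop :=
  GColoredDComplete θ κ ∧ ColoredLCB1 θ κ

/-- The top tree: the set of elements maximal in their color class. -/
def TopTree (κ : P → Γ) : Set P := {x : P | ∀ y : P, κ y = κ x → ¬x < y}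

/-- `x` is covered by `y` within the subposet `S`. -/
def CoversIn (S : Set P) (x y : P) : Prop :=
  x ∈ S ∧ y ∈ S ∧ x < y ∧ ∀ z ∈ S, x < z → ¬z < y

/-- Slant irreducibility of a Γ-colored d-complete poset. -/
def SlantIrreducible (κ : P → Γ) : Prop :=
  ConnectedPoset P ∧ ∀ x y : P, CoversIn (TopTree κ) x y → ∃ z : P, z ≠ y ∧ κ z = κ y

/-- A saturated chain in a subposet `S`: a chain that is convex in `S`. -/
def SaturatedChainIn (S C : Set P) : Prop :=
  C ⊆ S ∧ IsChain (· ≤ ·) C ∧ ∀ x ∈ C, ∀ y ∈ C, ∀ z ∈ S, x < z → z < y → z ∈ C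

/-- The lower frontier census at the element `y`. -/
noncomputable def LCensus (θ : Γ → Γ → ℤ) (κ : P → Γ) (y : P) : ℤ :=
  ∑ᶠ x ∈ LSet θ κ y, -θ (κ x) (κ y)

/-- A full heap: locally finite, surjectively colored, EC, NA, AC, ICE2, and every
color class order-isomorphic to ℤ. -/
def FullHeap (θ : Γ → Γ → ℤ) (κ : P → Γ) : Prop :=
  LocallyFinitePoset P ∧ Function.Surjective κ ∧ ColoredEC κ ∧ ColoredNA θ κ ∧
    ColoredAC θ κ ∧ ColoredICE2 θ κ ∧ ∀ a : Γ, Nonempty ({x : P // κ x = a} ≃o ℤ)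

end

/-- `ι` realizes the colored poset `A` as an order filter of the colored poset `B`. -/
def FilterEmbedding {G : Type*} {A B : Type*} [PartialOrder A] [PartialOrder B]
    (κ : A → G) (κ' : B → G) (ι : A → B) : Prop :=
  (∀ p q : A, ι p ≤ ι q ↔ p ≤ q) ∧ (∀ p : A, κ' (ι p) = κ p) ∧ IsUpperSet (Set.range ι)

/-- `B` is an extension of `A` by the color `a`, with extending element `x`. -/
def IsExtensionBy {G : Type*} {A B : Type*} [PartialOrder A] [PartialOrder B]
    (θ : G → G → ℤ) (κ : A → G) (κ' : B → G) (a : G) (ι : A → B) (x : B) : Prop :=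
  Finite B ∧ GColoredDComplete θ κ' ∧ ConnectedPoset B ∧
    FilterEmbedding κ κ' ι ∧ (Set.range ι)ᶜ = {x} ∧ κ' x = a


namespace ExtAux

variable {Γ : Type*} {P : Type*} [PartialOrder P]

def D (S : Set P) (p : P) : Set (Option P) := {z | (∃ q ≤ p, z = some q) ∨ (z = none ∧ p ∈ S)}
def X (P : Type*) : Set (Option P) := {none}
def B (S : Set P) : Type _ := {A : Set (Option P) // A = X P ∨ ∃ p, A = D S p}

instance (S : Set P) : PartialOrder (B S) := by unfold B; infer_instance

instance (S : Set P) [Fintype P] : Finite (B S) := by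
  haveI : Finite (Set (Option P)) := inferInstance
  unfold B; exact Subtype.finite

variable {S : Set P}

theorem le_iff (b c : B S) : b ≤ c ↔ b.1 ⊆ c.1 := Iff.rfl

def ix (S : Set P) (p : P) : B S := ⟨D S p, Or.inr ⟨p, rfl⟩⟩
def xx (S : Set P) : B S := ⟨X P, Or.inl rfl⟩

theorem some_mem_D {p q : P} : some q ∈ D S p ↔ q ≤ p := by
  constructor
  · rintro (⟨r, hr, he⟩ | ⟨he, _⟩)
    · obtain rfl : q = r := Option.some_injective _ he
      exact hr
    · exact absurd he (by simp)
  · exact fun h => Or.inl ⟨q, h, rfl⟩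

theorem none_mem_D {p : P} : (none : Option P) ∈ D S p ↔ p ∈ S := by
  constructor
  · rintro (⟨r, _, he⟩ | ⟨_, hm⟩)
    · exact absurd he (by simp)
    · exact hm
  · exact fun h => Or.inr ⟨rfl, h⟩

theorem D_subset_D (hS : IsUpperSet S) {p q : P} : D S p ⊆ D S q ↔ p ≤ q := by
  constructor
  · intro h; exact some_mem_D.1 (h (some_mem_D.2 le_rfl))
  · rintro h z (⟨r, hr, he⟩ | ⟨he, hm⟩)
    · exact Or.inl ⟨r, hr.trans h, he⟩
    · exact Or.inr ⟨he, hS h hm⟩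

theorem X_subset_D {p : P} : X P ⊆ D S p ↔ p ∈ S := by
  constructor
  · intro h; exact none_mem_D.1 (h rfl)
  · intro h z hz; rw [X, Set.mem_singleton_iff] at hz; subst hz; exact none_mem_D.2 h

theorem not_D_subset_X {p : P} : ¬ D S p ⊆ X P := by
  intro h
  have := h (some_mem_D.2 (le_refl p))
  simp [X] at this

theorem ix_le_ix (hS : IsUpperSet S) {p q : P} : ix S p ≤ ix S q ↔ p ≤ q := D_subset_D hS

theorem xx_le_ix {p : P} : xx S ≤ ix S p ↔ p ∈ S := X_subset_D

theorem not_ix_le_xx {p : P} : ¬ ix S p ≤ xx S := not_D_subset_X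

theorem xx_ne_ix {p : P} : xx S ≠ ix S p := by
  intro h
  have h2 : X P = D S p := congrArg Subtype.val h
  exact not_D_subset_X (by rw [← h2])

theorem D_inj {p q : P} (h : D S p = D S q) : p = q := by
  have h1 : q ≤ p := some_mem_D.1 (h ▸ some_mem_D.2 (le_refl q))
  have h2 : p ≤ q := some_mem_D.1 (h.symm ▸ some_mem_D.2 (le_refl p))
  exact le_antisymm h2 h1

theorem ix_inj : Function.Injective (ix S) := fun p q h => D_inj (congrArg Subtype.val h)

theorem b_cases (b : B S) : b = xx S ∨ ∃ p, b = ix S p := by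
  rcases b.2 with h | ⟨p, h⟩
  · exact Or.inl (Subtype.ext h)
  · exact Or.inr ⟨p, Subtype.ext h⟩

theorem ix_lt_ix (hS : IsUpperSet S) {p q : P} : ix S p < ix S q ↔ p < q := by
  rw [lt_iff_le_not_ge, lt_iff_le_not_ge, ix_le_ix hS, ix_le_ix hS]

theorem xx_lt_ix {p : P} : xx S < ix S p ↔ p ∈ S := by
  rw [lt_iff_le_not_ge]
  exact ⟨fun h => xx_le_ix.1 h.1, fun h => ⟨xx_le_ix.2 h, not_ix_le_xx⟩⟩

theorem not_lt_xx (b : B S) : ¬ b < xx S := by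
  rcases b_cases b with h | ⟨p, h⟩
  · subst h; exact lt_irrefl _
  · subst h; exact fun hlt => not_ix_le_xx hlt.le

open Classical in
noncomputable def kk (S : Set P) (κ : P → Γ) (a : Γ) (b : B S) : Γ :=
  if h : ∃ p, b.1 = D S p then κ h.choose else a

theorem kk_ix (κ : P → Γ) (a : Γ) (p : P) : kk S κ a (ix S p) = κ p := by
  have h : ∃ q, (ix S p).1 = D S q := ⟨p, rfl⟩
  rw [kk]
  rw [dif_pos h]
  congr 1
  exact D_inj h.choose_spec.symm

theorem kk_xx (κ : P → Γ) (a : Γ) : kk S κ a (xx S) = a := by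
  have h : ¬ ∃ q, (xx S).1 = D S q := by
    rintro ⟨q, hq⟩
    have hq' : X P = D S q := hq
    exact not_D_subset_X (by rw [← hq'])
  rw [kk]
  rw [dif_neg h]

end ExtAux

/-- Sum over a superset equals sum over subset when terms vanish off the subset. -/
theorem finsum_sub_zero {α : Type*} [Finite α] {s t : Set α} (f : α → ℤ) (hst : s ⊆ t)
    (h0 : ∀ z ∈ t, z ∉ s → f z = 0) : ∑ᶠ z ∈ t, f z = ∑ᶠ z ∈ s, f z := by
  have h : t ∩ Function.support f = s ∩ Function.support f := by
    ext z
    constructor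
    · rintro ⟨hzt, hzf⟩
      exact ⟨by_contra fun hc => hzf (h0 z hzt hc), hzf⟩
    · rintro ⟨hzs, hzf⟩
      exact ⟨hst hzs, hzf⟩
  rw [finsum_mem_eq_sum f (Set.toFinite _), finsum_mem_eq_sum f (Set.toFinite _)]
  apply Finset.sum_congr _ (fun _ _ => rfl)
  ext z
  simp only [Set.Finite.mem_toFinset]
  rw [h]

/-- A connected finite Γ-colored d-complete poset is extendable by the
color a if and only if its lower frontier census for a equals 2. -/
theorem extendable_iff_census_two [Fintype Γ] [PartialOrder P] [Fintype P] [Nonempty P]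
    (θ : Γ → Γ → ℤ) (κ : P → Γ) (hθ : DynkinDatum θ)
    (hdc : GColoredDComplete θ κ) (hconn : ConnectedPoset P)
    (a : Γ) (y : P) (hy : κ y = a) (hymin : ∀ z : P, κ z = a → y ≤ z) :
    (∃ (B : Type v) (instB : PartialOrder B) (κ' : B → Γ) (ι : P → B) (x : B),
        @IsExtensionBy Γ P B inferInstance instB θ κ κ' a ι x) ↔
      LCensus θ κ y = 2 := by
  obtain ⟨hlf, hsurj, hEC, hNA, hAC, hICE2, hUCB1⟩ := hdc
  obtain ⟨hθ2, hθle, hθ0⟩ := hθ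
  have hflip : ∀ b c : Γ, θ b c < 0 → θ c b < 0 := by
    intro b c h
    have hne : b ≠ c := by
      rintro rfl
      rw [hθ2] at h
      omega
    rcases (hθle c b hne.symm).lt_or_eq with h' | h'
    · exact h'
    · exact absurd ((hθ0 c b hne.symm).1 h') (by omega)
  have hzero : ∀ c : Γ, c ≠ a → ¬θ c a < 0 → θ c a = 0 :=
    fun c hne h => le_antisymm (hθle c a hne) (not_lt.1 h)
  constructor
  · -- forward direction
    rintro ⟨B0, instB, κ', ι, x, hfinB, hdcB, hconnB, ⟨hι_le, hκ', hupper⟩, hcompl, hxa⟩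
    obtain ⟨hlfB, hsurjB, hECB, hNAB, hACB, hICE2B, hUCB1B⟩ := hdcB
    have hxnotr : x ∉ Set.range ι := by
      have : x ∈ (Set.range ι)ᶜ := by rw [hcompl]; rfl
      exact this
    have hmem : ∀ b : B0, b ≠ x → b ∈ Set.range ι := by
      intro b hb
      by_contra hc
      have : b ∈ (Set.range ι)ᶜ := hc
      rw [hcompl] at this
      exact hb this
    have hinj : Function.Injective ι := fun p q h =>
      le_antisymm ((hι_le p q).1 h.le) ((hι_le q p).1 h.ge)
    have hιlt : ∀ w v : P, ι w < ι v ↔ w < v := by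
      intro w v
      rw [lt_iff_le_not_ge, lt_iff_le_not_ge, hι_le, hι_le]
    have hxlt : ∀ w : P, (ι w ≤ x ∨ x ≤ ι w) → x < ι w := by
      intro w h
      rcases h with h | h
      · exact absurd (hupper h ⟨w, rfl⟩) hxnotr
      · exact lt_of_le_of_ne h fun he => hxnotr ⟨w, he.symm⟩
    have hxy : x < ι y := by
      refine hxlt y ?_
      have h := hECB x (ι y) (by rw [hκ', hy, hxa])
      tauto
    have hcons : ∀ z ∈ Set.Ioo x (ι y), κ' z ≠ a := by
      intro z hz hza
      obtain ⟨w, rfl⟩ := hmem z (ne_of_gt hz.1)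
      have hwa : κ w = a := by rw [← hκ' w]; exact hza
      have h1 : y ≤ w := hymin w hwa
      have h2 : w < y := (hιlt w y).1 hz.2
      exact absurd h1 h2.not_ge
    have hsum := hICE2B a x (ι y) hxa (by rw [hκ', hy]) hxy hcons
    set I : Set P := {w | x < ι w ∧ w < y} with hI
    have hIoo : Set.Ioo x (ι y) = ι '' I := by
      ext b
      constructor
      · rintro ⟨h1, h2⟩
        obtain ⟨w, rfl⟩ := hmem b (ne_of_gt h1)
        exact ⟨w, ⟨h1, (hιlt w y).1 h2⟩, rfl⟩
      · rintro ⟨w, ⟨h1, h2⟩, rfl⟩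
        exact ⟨h1, (hιlt w y).2 h2⟩
    rw [hIoo, finsum_mem_image hinj.injOn] at hsum
    rw [finsum_mem_congr rfl (fun w _ => by rw [hκ' w] : ∀ w ∈ I, -θ (κ' (ι w)) a = -θ (κ w) a)]
      at hsum
    have hLsub : LSet θ κ y ⊆ I := by
      rintro w ⟨hw1, hw2⟩
      refine ⟨hxlt w ?_, hw1⟩
      have hadj : AdjColor θ (κ' (ι w)) (κ' x) := by
        rw [hκ', hxa]
        rw [hy] at hw2
        exact hw2
      exact hACB (ι w) x hadj
    have hstep : ∑ᶠ w ∈ I, -θ (κ w) a = ∑ᶠ w ∈ LSet θ κ y, -θ (κ w) a := by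
      refine finsum_sub_zero _ hLsub ?_
      intro w hwI hwL
      have hwy : w < y := hwI.2
      have hka : κ w ≠ a := fun h => absurd (hymin w h) hwy.not_ge
      have hnadj : ¬θ (κ w) a < 0 := by
        intro h
        exact hwL ⟨hwy, by rw [hy]; exact h⟩
      rw [hzero (κ w) hka hnadj]
      ring
    have hfinal : LCensus θ κ y = ∑ᶠ w ∈ LSet θ κ y, -θ (κ w) a :=
      finsum_mem_congr rfl (fun w _ => by rw [hy])
    rw [hfinal, ← hstep, hsum]
  · -- backward direction
    intro hL
    classical
    set S : Set P := {p | ∃ q, q ≤ p ∧ (AdjColor θ (κ q) a ∨ κ q = a)} with hSdef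
    have hS : IsUpperSet S := by
      rintro u v huv ⟨q, hq, h⟩
      exact ⟨q, hq.trans huv, h⟩
    have hmemS_adj : ∀ p : P, AdjColor θ (κ p) a → p ∈ S := fun p h => ⟨p, le_rfl, Or.inl h⟩
    have hmemS_a : ∀ p : P, κ p = a → p ∈ S := fun p h => ⟨p, le_rfl, Or.inr h⟩
    have hyS : y ∈ S := hmemS_a y hy
    have hLne : (LSet θ κ y).Nonempty := by
      by_contra h
      rw [Set.not_nonempty_iff_eq_empty] at h
      rw [LCensus, h, finsum_mem_empty] at hL
      omega
    have hixle : ∀ p q : P, ExtAux.ix S p ≤ ExtAux.ix S q ↔ p ≤ q := fun p q => ExtAux.ix_le_ix hS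
    have hixlt : ∀ p q : P, ExtAux.ix S p < ExtAux.ix S q ↔ p < q := fun p q => ExtAux.ix_lt_ix hS
    have hkkix : ∀ p : P, ExtAux.kk S κ a (ExtAux.ix S p) = κ p := ExtAux.kk_ix κ a
    have hkkxx : ExtAux.kk S κ a (ExtAux.xx S) = a := ExtAux.kk_xx κ a
    refine ⟨ExtAux.B S, inferInstance, ExtAux.kk S κ a, ExtAux.ix S, ExtAux.xx S,
      inferInstance, ⟨?_, ?_, ?_, ?_, ?_, ?_, ?_⟩, ?_, ⟨hixle, hkkix, ?_⟩, ?_, hkkxx⟩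
    · -- locally finite
      intro u v
      exact Set.toFinite _
    · -- surjective
      intro c
      obtain ⟨p, hp⟩ := hsurj c
      exact ⟨ExtAux.ix S p, by rw [hkkix]; exact hp⟩
    · -- EC
      intro b1 b2 hcol
      rcases ExtAux.b_cases b1 with rfl | ⟨p, rfl⟩ <;> rcases ExtAux.b_cases b2 with rfl | ⟨q, rfl⟩
      · exact Or.inl le_rfl
      · rw [hkkxx, hkkix] at hcol
        exact Or.inl (ExtAux.xx_le_ix.2 (hmemS_a q hcol.symm))
      · rw [hkkxx, hkkix] at hcol
        exact Or.inr (ExtAux.xx_le_ix.2 (hmemS_a p hcol))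
      · rw [hkkix, hkkix] at hcol
        exact (hEC p q hcol).imp (hixle p q).2 (hixle q p).2
    · -- NA
      intro b1 b2 hcov
      rcases ExtAux.b_cases b2 with rfl | ⟨q, rfl⟩
      · exact absurd hcov.1 (ExtAux.not_lt_xx b1)
      rcases ExtAux.b_cases b1 with rfl | ⟨p, rfl⟩
      · -- xx covered by ix q
        rw [hkkxx, hkkix]
        obtain ⟨r, hrq, hr | hr⟩ := ExtAux.xx_lt_ix.1 hcov.1
        · rcases hrq.lt_or_eq with hlt | rfl
          · exact absurd ((hixlt r q).2 hlt)
              (hcov.2 (ExtAux.xx_lt_ix.2 (hmemS_adj r hr)))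
          · exact hflip _ _ hr
        · exfalso
          obtain ⟨z, hz1, hz2⟩ := hLne
          have hzadj : AdjColor θ (κ z) a := by rw [← hy]; exact hz2
          have hzq : z < r := lt_of_lt_of_le hz1 (hymin r hr)
          exact hcov.2 (ExtAux.xx_lt_ix.2 (hmemS_adj z hzadj))
            ((hixlt z q).2 (hzq.trans_le hrq))
      · -- ix p covered by ix q
        have hpq : p ⋖ q := by
          constructor
          · exact (hixlt p q).1 hcov.1
          · intro z hz1 hz2
            exact hcov.2 ((hixlt p z).2 hz1) ((hixlt z q).2 hz2)
        have := hNA p q hpq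
        rwa [hkkix, hkkix]
    · -- AC
      intro b1 b2 hadj
      rcases ExtAux.b_cases b1 with rfl | ⟨p, rfl⟩ <;> rcases ExtAux.b_cases b2 with rfl | ⟨q, rfl⟩
      · exact Or.inl le_rfl
      · rw [hkkxx, hkkix] at hadj
        exact Or.inl (ExtAux.xx_le_ix.2 (hmemS_adj q (hflip _ _ hadj)))
      · rw [hkkxx, hkkix] at hadj
        exact Or.inr (ExtAux.xx_le_ix.2 (hmemS_adj p hadj))
      · rw [hkkix, hkkix] at hadj
        exact (hAC p q hadj).imp (hixle p q).2 (hixle q p).2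
    · -- ICE2
      intro c u v hcu hcv huv hno
      rcases ExtAux.b_cases v with rfl | ⟨q, rfl⟩
      · exact absurd huv (ExtAux.not_lt_xx u)
      rcases ExtAux.b_cases u with rfl | ⟨p, rfl⟩
      · -- u = xx
        have hc : a = c := by rw [← hcu, hkkxx]
        subst hc
        have hqa : κ q = a := by rw [← hkkix q]; exact hcv
        have hqy : y = q := by
          by_contra hne
          have hyq : y < q := lt_of_le_of_ne (hymin q hqa) hne
          exact hno (ExtAux.ix S y) ⟨ExtAux.xx_lt_ix.2 hyS, (hixlt y q).2 hyq⟩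
            (by rw [hkkix]; exact hy)
        subst hqy
        have hIoo : Set.Ioo (ExtAux.xx S) (ExtAux.ix S y)
            = ExtAux.ix S '' {z | z ∈ S ∧ z < y} := by
          ext b
          constructor
          · rintro ⟨h1, h2⟩
            rcases ExtAux.b_cases b with rfl | ⟨z, rfl⟩
            · exact absurd h1 (lt_irrefl _)
            · exact ⟨z, ⟨ExtAux.xx_lt_ix.1 h1, (hixlt z y).1 h2⟩, rfl⟩
          · rintro ⟨z, ⟨hz1, hz2⟩, rfl⟩
            exact ⟨ExtAux.xx_lt_ix.2 hz1, (hixlt z y).2 hz2⟩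
        rw [hIoo, finsum_mem_image ExtAux.ix_inj.injOn]
        rw [finsum_mem_congr rfl
          (fun z _ => by rw [hkkix z] : ∀ z ∈ {z | z ∈ S ∧ z < y},
            -θ (ExtAux.kk S κ a (ExtAux.ix S z)) a = -θ (κ z) a)]
        have hsub : LSet θ κ y ⊆ {z | z ∈ S ∧ z < y} := by
          rintro z ⟨hz1, hz2⟩
          rw [hy] at hz2
          exact ⟨hmemS_adj z hz2, hz1⟩
        have hz0 : ∀ z ∈ {z | z ∈ S ∧ z < y}, z ∉ LSet θ κ y → -θ (κ z) a = 0 := by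
          rintro z ⟨_, hzy⟩ hzL
          have hka : κ z ≠ a := fun h => absurd (hymin z h) hzy.not_ge
          have hnadj : ¬θ (κ z) a < 0 := by
            intro h
            exact hzL ⟨hzy, by rw [hy]; exact h⟩
          rw [hzero (κ z) hka hnadj]
          ring
        calc ∑ᶠ z ∈ {z | z ∈ S ∧ z < y}, -θ (κ z) a
            = ∑ᶠ z ∈ LSet θ κ y, -θ (κ z) a := finsum_sub_zero _ hsub hz0
          _ = LCensus θ κ y := (finsum_mem_congr rfl (fun z _ => by rw [hy])).symm
          _ = 2 := hL
      · -- u = ix p, v = ix q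
        have hIoo : Set.Ioo (ExtAux.ix S p) (ExtAux.ix S q)
            = ExtAux.ix S '' Set.Ioo p q := by
          ext b
          constructor
          · rintro ⟨h1, h2⟩
            rcases ExtAux.b_cases b with rfl | ⟨z, rfl⟩
            · exact absurd h1.le ExtAux.not_ix_le_xx
            · exact ⟨z, ⟨(hixlt p z).1 h1, (hixlt z q).1 h2⟩, rfl⟩
          · rintro ⟨z, ⟨hz1, hz2⟩, rfl⟩
            exact ⟨(hixlt p z).2 hz1, (hixlt z q).2 hz2⟩
        rw [hIoo, finsum_mem_image ExtAux.ix_inj.injOn]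
        rw [finsum_mem_congr rfl
          (fun z _ => by rw [hkkix z] : ∀ z ∈ Set.Ioo p q,
            -θ (ExtAux.kk S κ a (ExtAux.ix S z)) c = -θ (κ z) c)]
        refine hICE2 c p q (by rw [← hkkix p]; exact hcu) (by rw [← hkkix q]; exact hcv)
          ((hixlt p q).1 huv) ?_
        intro z hz hzc
        exact hno (ExtAux.ix S z) ⟨(hixlt p z).2 hz.1, (hixlt z q).2 hz.2⟩
          (by rw [hkkix]; exact hzc)
    · -- UCB1
      intro b hmax
      rcases ExtAux.b_cases b with rfl | ⟨p, rfl⟩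
      · exact absurd (ExtAux.xx_lt_ix.2 hyS)
          (hmax (ExtAux.ix S y) (by rw [hkkix, hkkxx, hy]))
      · have hpmax : ∀ z : P, κ z = κ p → ¬p < z := by
          intro z hz hlt
          exact hmax (ExtAux.ix S z) (by rw [hkkix, hkkix, hz]) ((hixlt p z).2 hlt)
        obtain ⟨_, hsum⟩ := hUCB1 p hpmax
        refine ⟨Set.toFinite _, ?_⟩
        have hU : USet θ (ExtAux.kk S κ a) (ExtAux.ix S p) = ExtAux.ix S '' USet θ κ p := by
          ext b
          constructor
          · rintro ⟨h1, h2⟩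
            rcases ExtAux.b_cases b with rfl | ⟨z, rfl⟩
            · exact absurd h1.le ExtAux.not_ix_le_xx
            · rw [hkkix, hkkix] at h2
              exact ⟨z, ⟨(hixlt p z).1 h1, h2⟩, rfl⟩
          · rintro ⟨z, ⟨h1, h2⟩, rfl⟩
            refine ⟨(hixlt p z).2 h1, ?_⟩
            rw [hkkix, hkkix]
            exact h2
        rw [hU, finsum_mem_image ExtAux.ix_inj.injOn]
        rw [finsum_mem_congr rfl
          (fun z _ => by rw [hkkix z, hkkix p] : ∀ z ∈ USet θ κ p,
            -θ (ExtAux.kk S κ a (ExtAux.ix S z)) (ExtAux.kk S κ a (ExtAux.ix S p))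
              = -θ (κ z) (κ p))]
        exact hsum
    · -- connected
      intro T hT1 hT2
      by_cases hA : ({p : P | ExtAux.ix S p ∈ T}).Nonempty
      · by_cases hB2 : ({p : P | ExtAux.ix S p ∈ T}ᶜ).Nonempty
        · obtain ⟨p, hp, q, hq, hcomp⟩ := hconn _ hA hB2
          exact ⟨ExtAux.ix S p, hp, ExtAux.ix S q, hq, hcomp.imp (hixle p q).2 (hixle q p).2⟩
        · have hall : ∀ p, ExtAux.ix S p ∈ T := by
            intro p
            by_contra h
            exact hB2 ⟨p, h⟩
          obtain ⟨b, hb⟩ := hT2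
          rcases ExtAux.b_cases b with rfl | ⟨p, rfl⟩
          · exact ⟨ExtAux.ix S y, hall y, ExtAux.xx S, hb, Or.inr (ExtAux.xx_le_ix.2 hyS)⟩
          · exact absurd (hall p) hb
      · have hall : ∀ p, ExtAux.ix S p ∉ T := fun p h => hA ⟨p, h⟩
        obtain ⟨b, hb⟩ := hT1
        rcases ExtAux.b_cases b with rfl | ⟨p, rfl⟩
        · exact ⟨ExtAux.xx S, hb, ExtAux.ix S y, hall y, Or.inl (ExtAux.xx_le_ix.2 hyS)⟩
        · exact absurd hb (hall p)
    · -- upper set range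
      rintro b1 b2 h12 ⟨p, rfl⟩
      rcases ExtAux.b_cases b2 with rfl | ⟨q, rfl⟩
      · exact absurd h12 ExtAux.not_ix_le_xx
      · exact ⟨q, rfl⟩
    · -- complement of range is {xx}
      ext b
      simp only [Set.mem_compl_iff, Set.mem_range, Set.mem_singleton_iff]
      constructor
      · intro h
        rcases ExtAux.b_cases b with rfl | ⟨p, rfl⟩
        · rfl
        · exact absurd ⟨p, rfl⟩ h
      · rintro rfl ⟨p, hp⟩
        exact ExtAux.xx_ne_ix hp.symm
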